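/- arXiv:2204.08130 — 4 statements merged into one kernel-verified Lean document; each statement's English description precedes it below -/
import Mathlib

section
/- Let n ∈ ℤ, ξ, η ∈ ℝ², m' ∈ ℤ, and define Λ_k(ζ) = √(1 + |ζ|² + k²) for k ∈ ℤ, ζ ∈ ℝ². Set a = |ξ|² + n², b = |ξ−η|² + (n−m')², c = |η|² + m'². Then for any choice of signs, 1/|Λ_n(ξ) ± Λ_{n−m'}(ξ−η) ± Λ_{m'}(η)| ≤ 2√(1 + min(a, b, c)) (whenever the denominator is nonzero). -/
noncomputable section

/-- The Klein–Gordon dispersion relation `Λ_k(ζ) = √(1 + |ζ|² + k²)` on `ℝ² × 𝕋`. -/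
def KGweight (k : ℤ) (ζ : EuclideanSpace ℝ (Fin 2)) : ℝ :=
  Real.sqrt (1 + ‖ζ‖ ^ 2 + (k : ℝ) ^ 2)


lemma aux_le_of_sq {x y : ℝ} (hx : 0 ≤ x) (hy : 0 ≤ y) (h : x^2 ≤ y^2) : x ≤ y := by
  nlinarith

lemma aux_easy {X D' : ℝ} (hX : 1 ≤ X) (hD : 1 ≤ D') : 1/(2*X) ≤ D' := by
  rw [div_le_iff₀ (by linarith)]
  nlinarith

lemma aux_gap {X nx D' : ℝ} (hnx : 0 ≤ nx) (hX0 : 0 ≤ X) (hX2 : X^2 = 1 + nx^2)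
    (hD : X - nx ≤ D') : 1/(2*X) ≤ D' := by
  have hX1 : 1 ≤ X := by nlinarith
  have h1 : 1 ≤ 2*X*(X - nx) := by nlinarith [sq_nonneg (X - nx)]
  rw [div_le_iff₀ (by linarith)]
  nlinarith [mul_le_mul_of_nonneg_right hD (by linarith : (0:ℝ) ≤ 2*X)]

lemma aux_CS {na nq nr ip : ℝ} (hnq : 0 ≤ nq) (hna0 : 0 ≤ na)
    (hna2 : na^2 = nq^2 + nr^2 + 2*ip) (hipu : ip ≤ nq*nr) (hipl : -(nq*nr) ≤ ip) :
    -(na*nq) ≤ nq^2 + ip := by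
  nlinarith [mul_nonneg hna0 hnq,
    mul_nonneg (by linarith : (0:ℝ) ≤ nq*nr - ip) (by linarith : (0:ℝ) ≤ nq*nr + ip),
    sq_nonneg (na*nq + nq^2 + ip), sq_nonneg (na*nq - nq^2 - ip)]

lemma aux_hard {P Q R na nq nr ip : ℝ} (hP0 : 0 ≤ P) (hQ0 : 0 ≤ Q) (hna0 : 0 ≤ na)
    (hP2 : P^2 = 1 + (nq^2 + nr^2 + 2*ip)) (hQ2 : Q^2 = 1 + nq^2) (hR2 : R^2 = 1 + nr^2)
    (hna2 : na^2 = nq^2 + nr^2 + 2*ip) (hCSpq : -(na*nq) ≤ nq^2 + ip)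
    (hnqQ : nq ≤ Q) (hRPQ : R ≤ P + Q) : 1/(2*P) ≤ P + Q - R := by
  have hP1 : 1 ≤ P := by nlinarith
  have hQ1 : 1 ≤ Q := by nlinarith
  have hD0 : 0 ≤ P + Q - R := by linarith
  have hS : Q*(P-na) ≤ P*Q + nq^2 + ip := by
    nlinarith [mul_le_mul_of_nonneg_left hnqQ hna0]
  have h2p : 1 ≤ 2*P*(P-na) := by nlinarith [sq_nonneg (P - na)]
  have hQS : Q ≤ 2*P*(P*Q + nq^2 + ip) := by
    nlinarith [mul_le_mul_of_nonneg_left hS (by linarith : (0:ℝ) ≤ 2*P),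
      mul_le_mul_of_nonneg_left h2p hQ0]
  have key1 : (P+Q-R)*(P+Q+R) = 1 + 2*(P*Q + nq^2 + ip) := by
    linear_combination hP2 + hQ2 - hR2
  have h6 : (P+Q-R)*R ≤ (P+Q-R)*(P+Q) := mul_le_mul_of_nonneg_left hRPQ hD0
  have h7 : 1 + 2*(P*Q + nq^2 + ip) ≤ (P+Q-R)*(2*(P+Q)) := by nlinarith [h6, key1]
  have h8 : P + Q ≤ P*(1 + 2*(P*Q + nq^2 + ip)) := by nlinarith [hQS]
  have h9 : P + Q ≤ P*((P+Q-R)*(2*(P+Q))) := by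
    nlinarith [mul_le_mul_of_nonneg_left h7 hP0]
  rw [div_le_iff₀ (by linarith)]
  nlinarith [h9, mul_pos (by linarith : (0:ℝ) < P + Q) (by linarith : (0:ℝ) < P + Q)]

lemma aux_lip1 {P R nq nr ip : ℝ} (hP0 : 0 ≤ P) (hR0 : 0 ≤ R) (hnq : 0 ≤ nq)
    (hP2 : P^2 = 1 + (nq^2 + nr^2 + 2*ip)) (hR2 : R^2 = 1 + nr^2)
    (hipu : ip ≤ nq*nr) (hnrR : nr ≤ R) : P ≤ R + nq := by
  apply aux_le_of_sq hP0 (by linarith)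
  nlinarith [mul_le_mul_of_nonneg_left hnrR hnq]

lemma aux_lip2 {P R na nq nr ip : ℝ} (hP0 : 0 ≤ P) (hR0 : 0 ≤ R) (hnq : 0 ≤ nq)
    (hP2 : P^2 = 1 + (nq^2 + nr^2 + 2*ip)) (hR2 : R^2 = 1 + nr^2)
    (hipl : -(nq*nr) ≤ ip) (hnaP : na ≤ P) (hnrq : nr ≤ nq + na) : R ≤ P + nq := by
  have hnrP : nr ≤ nq + P := by linarith
  apply aux_le_of_sq hR0 (by linarith)
  nlinarith [mul_le_mul_of_nonneg_left hnrP hnq]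

lemma aux_tri1 {P Q R nq nr ip : ℝ} (hP0 : 0 ≤ P) (hQ0 : 0 ≤ Q) (hnr : 0 ≤ nr)
    (hP2 : P^2 = 1 + (nq^2 + nr^2 + 2*ip)) (hQ2 : Q^2 = 1 + nq^2) (hR2 : R^2 = 1 + nr^2)
    (hipu : ip ≤ nq*nr) (hnqQ : nq ≤ Q) (hnrR : nr ≤ R) : P ≤ Q + R := by
  apply aux_le_of_sq hP0 (by nlinarith)
  nlinarith [mul_le_mul hnqQ hnrR hnr hQ0]

lemma aux_tri2 {P Q R na nq nr : ℝ} (hP0 : 0 ≤ P) (hQ0 : 0 ≤ Q) (hR0 : 0 ≤ R)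
    (hnq : 0 ≤ nq) (hnr : 0 ≤ nr) (hna0 : 0 ≤ na)
    (hQ2 : Q^2 = 1 + nq^2) (hR2 : R^2 = 1 + nr^2)
    (hnaP : na ≤ P) (hnrR : nr ≤ R) (hnqr : nq ≤ nr + na) : Q ≤ P + R := by
  apply aux_le_of_sq hQ0 (by linarith)
  nlinarith [mul_le_mul hnaP hnrR hnr hP0, mul_self_le_mul_self hnq hnqr]

set_option maxHeartbeats 800000 in
lemma key_lemma (nq nr ip s₁ s₂ : ℝ) (hnq : 0 ≤ nq) (hnr : 0 ≤ nr)
    (hCS : |ip| ≤ nq * nr) (hs₁ : s₁ = 1 ∨ s₁ = -1) (hs₂ : s₂ = 1 ∨ s₂ = -1) :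
    1 / (2 * min (Real.sqrt (1 + (nq^2 + nr^2 + 2*ip)))
        (min (Real.sqrt (1 + nq^2)) (Real.sqrt (1 + nr^2)))) ≤
      |Real.sqrt (1 + (nq^2 + nr^2 + 2*ip)) + s₁ * Real.sqrt (1 + nq^2)
        + s₂ * Real.sqrt (1 + nr^2)| := by
  obtain ⟨hipl, hipu⟩ := abs_le.mp hCS
  have ha : 0 ≤ nq^2 + nr^2 + 2*ip := by nlinarith [sq_nonneg (nq - nr)]
  set P := Real.sqrt (1 + (nq^2 + nr^2 + 2*ip)) with hPdef
  set Q := Real.sqrt (1 + nq^2) with hQdef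
  set R := Real.sqrt (1 + nr^2) with hRdef
  set na := Real.sqrt (nq^2 + nr^2 + 2*ip) with hnadef
  have hP0 : 0 ≤ P := Real.sqrt_nonneg _
  have hQ0 : 0 ≤ Q := Real.sqrt_nonneg _
  have hR0 : 0 ≤ R := Real.sqrt_nonneg _
  have hna0 : 0 ≤ na := Real.sqrt_nonneg _
  have hP2 : P^2 = 1 + (nq^2 + nr^2 + 2*ip) := Real.sq_sqrt (by linarith)
  have hQ2 : Q^2 = 1 + nq^2 := Real.sq_sqrt (by positivity)
  have hR2 : R^2 = 1 + nr^2 := Real.sq_sqrt (by positivity)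
  have hna2 : na^2 = nq^2 + nr^2 + 2*ip := Real.sq_sqrt ha
  have hP2' : P^2 = 1 + (nr^2 + nq^2 + 2*ip) := by linarith
  have hna2' : na^2 = nr^2 + nq^2 + 2*ip := by linarith
  have hP1 : 1 ≤ P := by nlinarith [hP2, hP0, ha]
  have hQ1 : 1 ≤ Q := by nlinarith [hQ2, hQ0, sq_nonneg nq]
  have hR1 : 1 ≤ R := by nlinarith [hR2, hR0, sq_nonneg nr]
  have hnaP : na ≤ P := aux_le_of_sq hna0 hP0 (by linarith)
  have hnqQ : nq ≤ Q := aux_le_of_sq hnq hQ0 (by linarith)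
  have hnrR : nr ≤ R := aux_le_of_sq hnr hR0 (by linarith)
  have hipu' : ip ≤ nr*nq := by linarith [hipu]; 
  have hipl' : -(nr*nq) ≤ ip := by rw [mul_comm]; exact hipl
  have hnqr : nq ≤ nr + na := by nlinarith [sq_nonneg (nq - nr)]
  have hnrq : nr ≤ nq + na := by nlinarith [sq_nonneg (nq - nr)]
  have hPR1 : P ≤ R + nq := aux_lip1 hP0 hR0 hnq hP2 hR2 hipu hnrR
  have hPQ1 : P ≤ Q + nr := aux_lip1 hP0 hQ0 hnr hP2' hQ2 hipu' hnqQ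
  have hRP1 : R ≤ P + nq := aux_lip2 hP0 hR0 hnq hP2 hR2 hipl hnaP hnrq
  have hQP1 : Q ≤ P + nr := aux_lip2 hP0 hQ0 hnr hP2' hQ2 hipl' hnaP hnqr
  have hPQR : P ≤ Q + R := aux_tri1 hP0 hQ0 hnr hP2 hQ2 hR2 hipu hnqQ hnrR
  have hQPR : Q ≤ P + R := aux_tri2 hP0 hQ0 hR0 hnq hnr hna0 hQ2 hR2 hnaP hnrR hnqr
  have hRPQ : R ≤ P + Q := aux_tri2 hP0 hR0 hQ0 hnr hnq hna0 hR2 hQ2 hnaP hnqQ hnrq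
  have hCSpq : -(na*nq) ≤ nq^2 + ip := aux_CS hnq hna0 hna2 hipu hipl
  have hCSpr : -(na*nr) ≤ nr^2 + ip := aux_CS hnr hna0 hna2' hipu' hipl'
  rcases hs₁ with rfl | rfl <;> rcases hs₂ with rfl | rfl
  · -- (+,+)
    have habs : |P + 1*Q + 1*R| = P + Q + R := by rw [abs_of_nonneg (by linarith)]; ring
    rw [habs]
    have hm1 : 1 ≤ min P (min Q R) := le_min hP1 (le_min hQ1 hR1)
    exact aux_easy hm1 (by linarith)
  · -- (+,-) : D = P + Q - R ≥ 0
    have habs : |P + 1*Q + -1*R| = P + Q - R := by rw [abs_of_nonneg (by linarith)]; ring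
    rw [habs]
    rcases le_total P (min Q R) with hPm | hPm
    · rw [min_eq_left hPm]
      exact aux_hard hP0 hQ0 hna0 hP2 hQ2 hR2 hna2 hCSpq hnqQ hRPQ
    · rw [min_eq_right hPm]
      rcases le_total Q R with hQR | hQR
      · rw [min_eq_left hQR]
        exact aux_gap hnq hQ0 hQ2 (by linarith [hRP1])
      · rw [min_eq_right hQR]
        have hRP : R ≤ P := (min_eq_right hQR) ▸ hPm
        exact aux_easy hR1 (by linarith)
  · -- (-,+) : D = P - Q + R ≥ 0
    have habs : |P + -1*Q + 1*R| = P - Q + R := by rw [abs_of_nonneg (by linarith)]; ring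
    rw [habs]
    rcases le_total P (min Q R) with hPm | hPm
    · rw [min_eq_left hPm]
      have := aux_hard hP0 hR0 hna0 hP2' hR2 hQ2 hna2' hCSpr hnrR hQPR
      linarith [this]
    · rw [min_eq_right hPm]
      rcases le_total Q R with hQR | hQR
      · rw [min_eq_left hQR]
        have hQP : Q ≤ P := (min_eq_left hQR) ▸ hPm
        exact aux_easy hQ1 (by linarith)
      · rw [min_eq_right hQR]
        exact aux_gap hnr hR0 hR2 (by linarith [hQP1])
  · -- (-,-) : D = P - Q - R ≤ 0
    have habs : |P + -1*Q + -1*R| = Q + R - P := by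
      rw [show P + -1*Q + -1*R = -(Q + R - P) by ring, abs_neg, abs_of_nonneg (by linarith)]
    rw [habs]
    rcases le_total P (min Q R) with hPm | hPm
    · rw [min_eq_left hPm]
      have hPQ := hPm.trans (min_le_left Q R)
      exact aux_easy hP1 (by linarith)
    · rw [min_eq_right hPm]
      rcases le_total Q R with hQR | hQR
      · rw [min_eq_left hQR]
        exact aux_gap hnq hQ0 hQ2 (by linarith [hPR1])
      · rw [min_eq_right hQR]
        exact aux_gap hnr hR0 hR2 (by linarith [hPQ1])

lemma aux_ha {nq nr ip : ℝ} (h : |ip| ≤ nq * nr) : 0 ≤ nq^2 + nr^2 + 2*ip := by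
  obtain ⟨h1, h2⟩ := abs_le.mp h
  nlinarith [sq_nonneg (nq - nr)]


set_option maxHeartbeats 1000000 in
/-- Small-denominator bound: for any signs `s₁, s₂ ∈ {+1, −1}`,
`1/|Λ_n(ξ) ± Λ_{n−m'}(ξ−η) ± Λ_{m'}(η)| ≤ 2√(1 + min(a,b,c))` with
`a = |ξ|² + n²`, `b = |ξ−η|² + (n−m')²`, `c = |η|² + m'²`. -/
theorem small_denominator_bound (n m' : ℤ) (ξ η : EuclideanSpace ℝ (Fin 2))
    (s₁ s₂ : ℝ) (hs₁ : s₁ = 1 ∨ s₁ = -1) (hs₂ : s₂ = 1 ∨ s₂ = -1)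
    (hden : KGweight n ξ + s₁ * KGweight (n - m') (ξ - η) + s₂ * KGweight m' η ≠ 0) :
    1 / |KGweight n ξ + s₁ * KGweight (n - m') (ξ - η) + s₂ * KGweight m' η| ≤
      2 * Real.sqrt (1 + min (‖ξ‖ ^ 2 + (n : ℝ) ^ 2)
        (min (‖ξ - η‖ ^ 2 + ((n : ℝ) - (m' : ℝ)) ^ 2) (‖η‖ ^ 2 + (m' : ℝ) ^ 2))) := by
  set u := ‖ξ - η‖ with hu
  set v := ‖η‖ with hv
  set t := (n : ℝ) - (m' : ℝ) with ht
  set s := (m' : ℝ) with hs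
  set I : ℝ := inner ℝ (ξ - η) η with hI
  set nq := Real.sqrt (u^2 + t^2) with hnqdef
  set nr := Real.sqrt (v^2 + s^2) with hnrdef
  set ip := I + t*s with hipdef
  have hu0 : 0 ≤ u := norm_nonneg _
  have hv0 : 0 ≤ v := norm_nonneg _
  have hnq0 : 0 ≤ nq := Real.sqrt_nonneg _
  have hnr0 : 0 ≤ nr := Real.sqrt_nonneg _
  have hnq2 : nq^2 = u^2 + t^2 := Real.sq_sqrt (by positivity)
  have hnr2 : nr^2 = v^2 + s^2 := Real.sq_sqrt (by positivity)
  -- decomposition of the norm of ξ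
  have hxi : ‖ξ‖^2 = u^2 + 2*I + v^2 := by
    have h := norm_add_sq_real (ξ - η) η
    rw [sub_add_cancel] at h
    rw [h]
  have hsum : ‖ξ‖^2 + (n:ℝ)^2 = nq^2 + nr^2 + 2*ip := by
    rw [hnq2, hnr2, hxi, hipdef, hs, ht]; ring
  -- Cauchy–Schwarz
  have hIcs : |I| ≤ u * v := abs_real_inner_le_norm _ _
  have hCS : |ip| ≤ nq * nr := by
    rw [← Real.sqrt_mul (by positivity), show |ip| = Real.sqrt (ip^2) from (Real.sqrt_sq_eq_abs ip).symm]
    apply Real.sqrt_le_sqrt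
    have h2 : |ip| ≤ u*v + |t| * |s| := by
      calc |ip| ≤ |I| + |t*s| := abs_add_le _ _
        _ ≤ u*v + |t| * |s| := by rw [abs_mul]; gcongr
    have h3 : ip^2 ≤ (u*v + |t| * |s|)^2 := by
      rw [← sq_abs ip]
      exact pow_le_pow_left₀ (abs_nonneg _) h2 2
    nlinarith [sq_nonneg (u * |s| - |t| * v), sq_abs t, sq_abs s, abs_nonneg t, abs_nonneg s,
      mul_nonneg (mul_nonneg hu0 hv0) (mul_nonneg (abs_nonneg t) (abs_nonneg s))]
  -- rewrite the three weights
  have hW1 : KGweight n ξ = Real.sqrt (1 + (nq^2 + nr^2 + 2*ip)) := by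
    rw [KGweight]; congr 1; rw [← hsum]; ring
  have hW2 : KGweight (n - m') (ξ - η) = Real.sqrt (1 + nq^2) := by
    rw [KGweight, hnq2]; congr 1; push_cast [← hu, ← ht]; ring
  have hW3 : KGweight m' η = Real.sqrt (1 + nr^2) := by
    rw [KGweight, hnr2]; congr 1; rw [← hv, ← hs]; ring
  have hmono : Monotone (fun x : ℝ => Real.sqrt (1+x)) :=
    fun x y h => Real.sqrt_le_sqrt (by linarith)
  have hmin : Real.sqrt (1 + min (‖ξ‖ ^ 2 + (n : ℝ) ^ 2) (min (u^2 + t^2) (v^2 + s^2)))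
      = min (Real.sqrt (1 + (nq^2 + nr^2 + 2*ip)))
          (min (Real.sqrt (1 + nq^2)) (Real.sqrt (1 + nr^2))) := by
    rw [hmono.map_min, hmono.map_min]
    simp only [hsum, hnq2, hnr2]
  have hkey := key_lemma nq nr ip s₁ s₂ hnq0 hnr0 hCS hs₁ hs₂
  rw [hW1, hW2, hW3] at hden ⊢
  rw [hmin]
  set M := min (Real.sqrt (1 + (nq^2 + nr^2 + 2*ip)))
      (min (Real.sqrt (1 + nq^2)) (Real.sqrt (1 + nr^2))) with hM
  set D := Real.sqrt (1 + (nq^2 + nr^2 + 2*ip)) + s₁ * Real.sqrt (1 + nq^2)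
      + s₂ * Real.sqrt (1 + nr^2) with hD
  clear_value I nq nr ip M D
  have hDpos : 0 < |D| := abs_pos.mpr hden
  have ha' : 0 ≤ nq^2 + nr^2 + 2*ip := aux_ha hCS
  have hMpos : 0 < M := by
    rw [hM]
    exact lt_min (Real.sqrt_pos.mpr (by linarith)) (lt_min (Real.sqrt_pos.mpr (by positivity))
      (Real.sqrt_pos.mpr (by positivity)))
  have h1 : 0 < 1/(2*M) := one_div_pos.mpr (by linarith)
  have h2 := one_div_le_one_div_of_le h1 hkey
  rwa [one_div_one_div] at h2

end
end

section
/- Let μ, ν ∈ {+1, −1}, n, m ∈ ℤ, ξ, η ∈ ℝ², and define Λ_k(ζ) = √(1 + |ζ|² + k²) and the phase Φ(ξ, η) = Λ_n(ξ) − μΛ_{n−m}(ξ−η) − νΛ_m(η). Then there is a universal constant C > 0 such that |∇_{ξ,η} Φ(ξ, η)| ≤ C |Φ(ξ, η)| for all ξ, η, n, m and all sign choices μ, ν. -/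
noncomputable section

/-- The phase `Φ^{n,m}_{μ,ν}(ξ, η) = Λ_n(ξ) − μ Λ_{n−m}(ξ−η) − ν Λ_m(η)`,
viewed as a function of the pair `(ξ, η)`. -/
def KGphase (μ ν : ℝ) (n m : ℤ)
    (p : EuclideanSpace ℝ (Fin 2) × EuclideanSpace ℝ (Fin 2)) : ℝ :=
  KGweight n p.1 - μ * KGweight (n - m) (p.1 - p.2) - ν * KGweight m p.2

open RealInnerProductSpace

abbrev E2 := EuclideanSpace ℝ (Fin 2)
def ed (z : E2) (k : ℝ) : ℝ := Real.sqrt (1 + ‖z‖ ^ 2 + k ^ 2)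
lemma ed_sq (z : E2) (k : ℝ) : ed z k ^ 2 = 1 + ‖z‖ ^ 2 + k ^ 2 :=
  Real.sq_sqrt (by positivity)
lemma ed_one_le (z : E2) (k : ℝ) : 1 ≤ ed z k := by
  rw [show (1:ℝ) = Real.sqrt 1 by simp]
  exact Real.sqrt_le_sqrt (by nlinarith [sq_nonneg ‖z‖, sq_nonneg k])
lemma ed_pos (z : E2) (k : ℝ) : 0 < ed z k := lt_of_lt_of_le one_pos (ed_one_le z k)
lemma ed_neg (z : E2) (k : ℝ) : ed (-z) (-k) = ed z k := by simp [ed]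

def Dq (z₁ : E2) (k₁ : ℝ) (z₂ : E2) (k₂ : ℝ) : ℝ :=
  ed z₁ k₁ * ed z₂ k₂ - (⟪z₁, z₂⟫ + k₁ * k₂)

lemma Dq_comm (z₁ : E2) (k₁ : ℝ) (z₂ : E2) (k₂ : ℝ) :
    Dq z₁ k₁ z₂ k₂ = Dq z₂ k₂ z₁ k₁ := by
  simp [Dq, real_inner_comm]; ring

lemma cs3 (z₁ : E2) (k₁ : ℝ) (z₂ : E2) (k₂ : ℝ) :
    (⟪z₁, z₂⟫ + k₁ * k₂) ^ 2 ≤ (‖z₁‖ ^ 2 + k₁ ^ 2) * (‖z₂‖ ^ 2 + k₂ ^ 2) := by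
  have h1 := abs_real_inner_le_norm z₁ z₂
  have h5 : ⟪z₁, z₂⟫ ^ 2 ≤ ‖z₁‖ ^ 2 * ‖z₂‖ ^ 2 := by
    nlinarith [sq_abs ⟪z₁, z₂⟫, abs_nonneg ⟪z₁, z₂⟫, norm_nonneg z₁, norm_nonneg z₂]
  have h6 : ⟪z₁, z₂⟫ * (k₁ * k₂) ≤ ‖z₁‖ * ‖z₂‖ * |k₁ * k₂| := by
    calc ⟪z₁, z₂⟫ * (k₁ * k₂) ≤ |⟪z₁, z₂⟫ * (k₁ * k₂)| := le_abs_self _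
    _ = |⟪z₁, z₂⟫| * |k₁ * k₂| := abs_mul _ _
    _ ≤ ‖z₁‖ * ‖z₂‖ * |k₁ * k₂| := by
        exact mul_le_mul_of_nonneg_right h1 (abs_nonneg _)
  have h7 : 2 * (‖z₁‖ * ‖z₂‖ * |k₁ * k₂|) ≤ ‖z₁‖ ^ 2 * k₂ ^ 2 + ‖z₂‖ ^ 2 * k₁ ^ 2 := by
    rw [abs_mul]
    nlinarith [sq_nonneg (‖z₁‖ * |k₂| - ‖z₂‖ * |k₁|), sq_abs k₁, sq_abs k₂,
      norm_nonneg z₁, norm_nonneg z₂, abs_nonneg k₁, abs_nonneg k₂]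
  nlinarith [h5, h6, h7]

lemma twoD (z₁ : E2) (k₁ : ℝ) (z₂ : E2) (k₂ : ℝ) :
    ed z₁ k₁ ^ 2 + ed z₂ k₂ ^ 2 ≤ 2 * ed z₁ k₁ * ed z₂ k₂ * Dq z₁ k₁ z₂ k₂ := by
  set e₁ := ed z₁ k₁ with he₁
  set e₂ := ed z₂ k₂ with he₂
  have h1 : ‖z₁‖ ^ 2 + k₁ ^ 2 = e₁ ^ 2 - 1 := by have := ed_sq z₁ k₁; linarith
  have h2 : ‖z₂‖ ^ 2 + k₂ ^ 2 = e₂ ^ 2 - 1 := by have := ed_sq z₂ k₂; linarith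
  have hcs : (⟪z₁, z₂⟫ + k₁ * k₂) ^ 2 ≤ (e₁ ^ 2 - 1) * (e₂ ^ 2 - 1) := by
    rw [← h1, ← h2]; exact cs3 z₁ k₁ z₂ k₂
  have he1 := ed_one_le z₁ k₁; have he2 := ed_one_le z₂ k₂
  rw [← he₁] at he1; rw [← he₂] at he2
  -- let S := sqrt((e₁²-1)(e₂²-1)); ip ≤ S and 2e₁e₂S ≤ 2e₁²e₂² - e₁² - e₂²
  set S := Real.sqrt ((e₁ ^ 2 - 1) * (e₂ ^ 2 - 1)) with hS
  have hSnn : 0 ≤ S := Real.sqrt_nonneg _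
  have hS2 : S ^ 2 = (e₁ ^ 2 - 1) * (e₂ ^ 2 - 1) :=
    Real.sq_sqrt (by nlinarith)
  have hip : ⟪z₁, z₂⟫ + k₁ * k₂ ≤ S := by
    have : |⟪z₁, z₂⟫ + k₁ * k₂| ≤ S := by
      rw [← Real.sqrt_sq_eq_abs, hS]
      exact Real.sqrt_le_sqrt hcs
    linarith [le_abs_self (⟪z₁, z₂⟫ + k₁ * k₂)]
  have key : 2 * e₁ * e₂ * S ≤ 2 * e₁ ^ 2 * e₂ ^ 2 - e₁ ^ 2 - e₂ ^ 2 := by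
    have hL : 0 ≤ 2 * e₁ ^ 2 * e₂ ^ 2 - e₁ ^ 2 - e₂ ^ 2 := by nlinarith
    have hsq : (2 * e₁ * e₂ * S) ^ 2 ≤ (2 * e₁ ^ 2 * e₂ ^ 2 - e₁ ^ 2 - e₂ ^ 2) ^ 2 := by
      nlinarith [sq_nonneg (e₁ ^ 2 - e₂ ^ 2)]
    nlinarith [mul_nonneg (mul_nonneg (mul_nonneg (by norm_num : (0:ℝ) ≤ 2) (by linarith : (0:ℝ) ≤ e₁)) (by linarith : (0:ℝ) ≤ e₂)) hSnn]
  simp only [Dq, ← he₁, ← he₂]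
  nlinarith [mul_le_mul_of_nonneg_left hip (by nlinarith : (0:ℝ) ≤ 2 * e₁ * e₂)]

lemma Dq_one_le (z₁ : E2) (k₁ : ℝ) (z₂ : E2) (k₂ : ℝ) : 1 ≤ Dq z₁ k₁ z₂ k₂ := by
  have h := twoD z₁ k₁ z₂ k₂
  have he1 := ed_one_le z₁ k₁; have he2 := ed_one_le z₂ k₂
  nlinarith [sq_nonneg (ed z₁ k₁ - ed z₂ k₂), mul_pos (ed_pos z₁ k₁) (ed_pos z₂ k₂)]

lemma lemA (z₁ : E2) (k₁ : ℝ) (z₂ : E2) (k₂ : ℝ) :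
    ‖(ed z₁ k₁)⁻¹ • z₁ - (ed z₂ k₂)⁻¹ • z₂‖ ≤
      3 * Dq z₁ k₁ z₂ k₂ / (ed z₁ k₁ + ed z₂ k₂) := by
  set e₁ := ed z₁ k₁ with he₁
  set e₂ := ed z₂ k₂ with he₂
  have he1 : (0:ℝ) < e₁ := ed_pos z₁ k₁
  have he2 : (0:ℝ) < e₂ := ed_pos z₂ k₂
  have hD : 1 ≤ Dq z₁ k₁ z₂ k₂ := Dq_one_le z₁ k₁ z₂ k₂
  have h2D := twoD z₁ k₁ z₂ k₂
  rw [← he₁, ← he₂] at h2D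
  set D := Dq z₁ k₁ z₂ k₂ with hDdef
  have hs1 : ‖z₁‖ ^ 2 = e₁ ^ 2 - 1 - k₁ ^ 2 := by have := ed_sq z₁ k₁; rw [← he₁] at this; linarith
  have hs2 : ‖z₂‖ ^ 2 = e₂ ^ 2 - 1 - k₂ ^ 2 := by have := ed_sq z₂ k₂; rw [← he₂] at this; linarith
  have hip : ⟪z₁, z₂⟫ + k₁ * k₂ = e₁ * e₂ - D := by simp [hDdef, Dq, ← he₁, ← he₂]
  have hexp : ‖(e₁)⁻¹ • z₁ - (e₂)⁻¹ • z₂‖ ^ 2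
      = ((e₁ ^ 2 - 1 - k₁ ^ 2) * e₂ ^ 2 - 2 * ⟪z₁, z₂⟫ * (e₁ * e₂)
        + (e₂ ^ 2 - 1 - k₂ ^ 2) * e₁ ^ 2) / (e₁ ^ 2 * e₂ ^ 2) := by
    rw [norm_sub_sq_real, norm_smul, norm_smul, real_inner_smul_left, real_inner_smul_right,
      mul_pow, mul_pow]
    rw [norm_inv, norm_inv, Real.norm_eq_abs, Real.norm_eq_abs,
      abs_of_pos he1, abs_of_pos he2, hs1, hs2]
    field_simp
  have hRpos : (0:ℝ) < 3 * D / (e₁ + e₂) := by positivity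
  have hA1 : ‖(e₁)⁻¹ • z₁ - (e₂)⁻¹ • z₂‖ ^ 2 ≤ 2 * D / (e₁ * e₂) := by
    rw [hexp, div_le_div_iff₀ (by positivity) (by positivity)]
    have hc : ⟪z₁, z₂⟫ = e₁ * e₂ - D - k₁ * k₂ := by linarith
    rw [hc]
    have hkey : 2 * (k₁ * k₂) * (e₁ * e₂) ≤ (1 + k₁ ^ 2) * e₂ ^ 2 + (1 + k₂ ^ 2) * e₁ ^ 2 := by
      nlinarith [sq_nonneg (k₁ * e₂ - k₂ * e₁), sq_nonneg e₁, sq_nonneg e₂]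
    nlinarith [mul_pos he1 he2, mul_le_mul_of_nonneg_right hkey (le_of_lt (mul_pos he1 he2))]
  have hA2 : 2 * D / (e₁ * e₂) ≤ (3 * D / (e₁ + e₂)) ^ 2 := by
    rw [div_pow, div_le_div_iff₀ (by positivity) (by positivity)]
    have h1 : 2 * D * (e₁ + e₂) ^ 2 ≤ 8 * D ^ 2 * (e₁ * e₂) := by
      nlinarith [mul_le_mul_of_nonneg_left h2D (by linarith : (0:ℝ) ≤ 2 * D),
        mul_nonneg (mul_nonneg (sub_nonneg.2 hD) (le_of_lt he1)) (le_of_lt he2),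
        mul_pos he1 he2,
        mul_nonneg (mul_nonneg (mul_nonneg (sub_nonneg.2 hD) (by linarith : (0:ℝ) ≤ D)) (le_of_lt he1)) (le_of_lt he2)]
    nlinarith [mul_pos he1 he2, mul_pos (mul_pos he1 he2) (mul_pos he1 he2)]
  have hfin : ‖(e₁)⁻¹ • z₁ - (e₂)⁻¹ • z₂‖ ^ 2 ≤ (3 * D / (e₁ + e₂)) ^ 2 := hA1.trans hA2
  have := Real.sqrt_le_sqrt hfin
  rwa [Real.sqrt_sq (norm_nonneg _), Real.sqrt_sq (le_of_lt hRpos)] at this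

lemma lemB (z₁ : E2) (k₁ : ℝ) (z₂ : E2) (k₂ : ℝ) :
    (ed z₁ k₁ + ed z₂ k₂ + ed (z₁ + z₂) (k₁ + k₂)) *
      (ed z₁ k₁ + ed z₂ k₂ - ed (z₁ + z₂) (k₁ + k₂)) = 1 + 2 * Dq z₁ k₁ z₂ k₂ := by
  have h1 := ed_sq z₁ k₁
  have h2 := ed_sq z₂ k₂
  have h3 := ed_sq (z₁ + z₂) (k₁ + k₂)
  have hn : ‖z₁ + z₂‖ ^ 2 = ‖z₁‖ ^ 2 + 2 * ⟪z₁, z₂⟫ + ‖z₂‖ ^ 2 := norm_add_sq_real z₁ z₂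
  rw [hn] at h3
  simp only [Dq]
  nlinarith [h1, h2, h3]

lemma tri (z₁ : E2) (k₁ : ℝ) (z₂ : E2) (k₂ : ℝ) :
    ed (z₁ + z₂) (k₁ + k₂) ≤ ed z₁ k₁ + ed z₂ k₂ := by
  nlinarith [lemB z₁ k₁ z₂ k₂, Dq_one_le z₁ k₁ z₂ k₂, ed_pos z₁ k₁, ed_pos z₂ k₂,
    ed_pos (z₁ + z₂) (k₁ + k₂)]

lemma lemC (z₁ : E2) (k₁ : ℝ) (z₂ : E2) (k₂ : ℝ) :
    Dq (z₁ + z₂) (k₁ + k₂) z₁ k₁ ≤ Dq z₁ k₁ z₂ k₂ + 1 := by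
  have htri := tri z₁ k₁ z₂ k₂
  have h1 := ed_sq z₁ k₁
  have he1 := ed_pos z₁ k₁
  simp only [Dq, inner_add_left, real_inner_self_eq_norm_sq, real_inner_comm z₂ z₁]
  nlinarith [mul_le_mul_of_nonneg_right htri (le_of_lt he1)]


lemma hasFDerivAt_ed (k : ℝ) (z : E2) :
    HasFDerivAt (fun w => ed w k) ((ed z k)⁻¹ • (innerSL ℝ z)) z := by
  have h1 : HasFDerivAt (fun w : E2 => 1 + ‖w‖ ^ 2 + k ^ 2)
      (2 • (innerSL ℝ z)) z := by
    simpa using (((hasFDerivAt_id z).norm_sq).const_add 1).add_const (k ^ 2)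
  have h2 : HasDerivAt Real.sqrt (1 / (2 * Real.sqrt (1 + ‖z‖ ^ 2 + k ^ 2)))
      (1 + ‖z‖ ^ 2 + k ^ 2) := Real.hasDerivAt_sqrt (by positivity)
  have h3 := h2.comp_hasFDerivAt z h1
  have he : ed z k ≠ 0 := (ed_pos z k).ne'
  refine h3.congr_fderiv ?_
  ext w
  simp [ed]
  ring


lemma normV_le_one (z : E2) (k : ℝ) : ‖(ed z k)⁻¹ • z‖ ≤ 1 := by
  have hp := ed_pos z k
  have hsq := ed_sq z k
  have hz : ‖z‖ ≤ ed z k := by nlinarith [norm_nonneg z, sq_nonneg k]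
  rw [norm_smul, norm_inv, Real.norm_eq_abs, abs_of_pos hp, inv_mul_le_iff₀ hp]
  simpa using hz

lemma keybound (zb zc : E2) (kb kc : ℝ) (μ ν : ℝ)
    (hμ : μ = 1 ∨ μ = -1) (hν : ν = 1 ∨ ν = -1) :
    ‖(ed (zb + zc) (kb + kc))⁻¹ • (zb + zc) - μ • ((ed zb kb)⁻¹ • zb)‖
      + ‖μ • ((ed zb kb)⁻¹ • zb) - ν • ((ed zc kc)⁻¹ • zc)‖
    ≤ 20 * |ed (zb + zc) (kb + kc) - μ * ed zb kb - ν * ed zc kc| := by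
  set ea := ed (zb + zc) (kb + kc) with hea
  set eb := ed zb kb with heb
  set ec := ed zc kc with hec
  have hpa : (0:ℝ) < ea := ed_pos _ _
  have hpb : (0:ℝ) < eb := ed_pos _ _
  have hpc : (0:ℝ) < ec := ed_pos _ _
  have htriA : ea ≤ eb + ec := tri zb kb zc kc
  have htriB : eb ≤ ea + ec := by
    have h := tri (zb + zc) (kb + kc) (-zc) (-kc)
    rw [show zb + zc + -zc = zb by abel, show kb + kc + -kc = kb by ring, ed_neg] at h
    exact h
  have htriC : ec ≤ ea + eb := by
    have h := tri (zb + zc) (kb + kc) (-zb) (-kb)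
    rw [show zb + zc + -zb = zc by abel, show kb + kc + -kb = kc by ring, ed_neg] at h
    exact h
  rcases hμ with hμ | hμ <;> rcases hν with hν | hν <;> subst hμ <;> subst hν
  · -- μ = 1, ν = 1
    have hD1 : 1 ≤ Dq zb kb zc kc := Dq_one_le _ _ _ _
    have hB := lemB zb kb zc kc
    rw [← hea, ← heb, ← hec] at hB
    set D := Dq zb kb zc kc with hD
    have hSpos : 0 < eb + ec - ea := by nlinarith
    have habs : |ea - 1 * eb - 1 * ec| = eb + ec - ea := by
      rw [show ea - 1 * eb - 1 * ec = -(eb + ec - ea) by ring, abs_neg, abs_of_pos hSpos]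
    rw [habs]
    have hu : ‖ea⁻¹ • (zb + zc) - (1:ℝ) • (eb⁻¹ • zb)‖ ≤ 9 * (eb + ec - ea) := by
      rw [one_smul]
      refine (lemA (zb + zc) (kb + kc) zb kb).trans ?_
      have hC : Dq (zb + zc) (kb + kc) zb kb ≤ D + 1 := lemC zb kb zc kc
      have h1 : (1:ℝ) ≤ Dq (zb + zc) (kb + kc) zb kb := Dq_one_le _ _ _ _
      rw [div_le_iff₀ (by linarith)]
      nlinarith [mul_nonneg (le_of_lt hSpos) (by linarith : (0:ℝ) ≤ ea + eb - ec)]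
    have hv : ‖(1:ℝ) • (eb⁻¹ • zb) - (1:ℝ) • (ec⁻¹ • zc)‖ ≤ 3 * (eb + ec - ea) := by
      rw [one_smul, one_smul]
      refine (lemA zb kb zc kc).trans ?_
      rw [div_le_iff₀ (by linarith)]
      nlinarith [sq_nonneg (eb + ec - ea)]
    linarith
  · -- μ = 1, ν = -1
    have hB := lemB (zb + zc) (kb + kc) (-zc) (-kc)
    rw [show zb + zc + -zc = zb by abel, show kb + kc + -kc = kb by ring, ed_neg,
      ← hea, ← heb, ← hec] at hB
    set D := Dq (zb + zc) (kb + kc) (-zc) (-kc) with hD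
    have hD1 : 1 ≤ D := Dq_one_le _ _ _ _
    have hSpos : 0 < ea + ec - eb := by nlinarith
    have habs : |ea - 1 * eb - -1 * ec| = ea + ec - eb := by
      rw [show ea - 1 * eb - -1 * ec = ea + ec - eb by ring, abs_of_pos hSpos]
    rw [habs]
    have hu : ‖ea⁻¹ • (zb + zc) - (1:ℝ) • (eb⁻¹ • zb)‖ ≤ 9 * (ea + ec - eb) := by
      rw [one_smul]
      refine (lemA (zb + zc) (kb + kc) zb kb).trans ?_
      have hC : Dq (zb + zc) (kb + kc) zb kb ≤ D + 1 := by
        have h := lemC (zb + zc) (kb + kc) (-zc) (-kc)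
        rw [show zb + zc + -zc = zb by abel, show kb + kc + -kc = kb by ring] at h
        rw [Dq_comm]
        exact h
      have h1 : (1:ℝ) ≤ Dq (zb + zc) (kb + kc) zb kb := Dq_one_le _ _ _ _
      rw [div_le_iff₀ (by linarith)]
      nlinarith [mul_nonneg (le_of_lt hSpos) (by linarith : (0:ℝ) ≤ ea + eb - ec)]
    have hv : ‖(1:ℝ) • (eb⁻¹ • zb) - (-1:ℝ) • (ec⁻¹ • zc)‖ ≤ 9 * (ea + ec - eb) := by
      rw [one_smul, neg_one_smul, sub_neg_eq_add]
      have heq : eb⁻¹ • zb + ec⁻¹ • zc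
          = (ed zb kb)⁻¹ • zb - (ed (-zc) (-kc))⁻¹ • (-zc) := by
        rw [ed_neg, smul_neg, sub_neg_eq_add, ← heb, ← hec]
      rw [heq]
      refine (lemA zb kb (-zc) (-kc)).trans ?_
      rw [ed_neg, ← heb, ← hec]
      have hC : Dq zb kb (-zc) (-kc) ≤ D + 1 := by
        have h := lemC (-zc) (-kc) (zb + zc) (kb + kc)
        rw [show -zc + (zb + zc) = zb by abel, show -kc + (kb + kc) = kb by ring,
          Dq_comm (-zc) (-kc) (zb + zc) (kb + kc)] at h
        exact h
      have h1 : (1:ℝ) ≤ Dq zb kb (-zc) (-kc) := Dq_one_le _ _ _ _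
      rw [div_le_iff₀ (by linarith)]
      nlinarith [mul_nonneg (le_of_lt hSpos) (by linarith : (0:ℝ) ≤ eb + ec - ea)]
    linarith
  · -- μ = -1, ν = 1
    have hB := lemB (zb + zc) (kb + kc) (-zb) (-kb)
    rw [show zb + zc + -zb = zc by abel, show kb + kc + -kb = kc by ring, ed_neg,
      ← hea, ← heb, ← hec] at hB
    set D := Dq (zb + zc) (kb + kc) (-zb) (-kb) with hD
    have hD1 : 1 ≤ D := Dq_one_le _ _ _ _
    have hSpos : 0 < ea + eb - ec := by nlinarith
    have habs : |ea - -1 * eb - 1 * ec| = ea + eb - ec := by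
      rw [show ea - -1 * eb - 1 * ec = ea + eb - ec by ring, abs_of_pos hSpos]
    rw [habs]
    have hu : ‖ea⁻¹ • (zb + zc) - (-1:ℝ) • (eb⁻¹ • zb)‖ ≤ 9 * (ea + eb - ec) := by
      rw [neg_one_smul, sub_neg_eq_add]
      have heq : ea⁻¹ • (zb + zc) + eb⁻¹ • zb
          = (ed (zb + zc) (kb + kc))⁻¹ • (zb + zc) - (ed (-zb) (-kb))⁻¹ • (-zb) := by
        rw [ed_neg, smul_neg, sub_neg_eq_add, ← hea, ← heb]
      rw [heq]
      refine (lemA (zb + zc) (kb + kc) (-zb) (-kb)).trans ?_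
      rw [ed_neg, ← hea, ← heb]
      rw [div_le_iff₀ (by linarith)]
      nlinarith [mul_nonneg (le_of_lt hSpos) (by linarith : (0:ℝ) ≤ eb + ec - ea)]
    have hv : ‖(-1:ℝ) • (eb⁻¹ • zb) - (1:ℝ) • (ec⁻¹ • zc)‖ ≤ 9 * (ea + eb - ec) := by
      rw [neg_one_smul, one_smul, show -(eb⁻¹ • zb) - ec⁻¹ • zc = -(ec⁻¹ • zc + eb⁻¹ • zb) by abel,
        norm_neg]
      have heq : ec⁻¹ • zc + eb⁻¹ • zb
          = (ed zc kc)⁻¹ • zc - (ed (-zb) (-kb))⁻¹ • (-zb) := by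
        rw [ed_neg, smul_neg, sub_neg_eq_add, ← heb, ← hec]
      rw [heq]
      refine (lemA zc kc (-zb) (-kb)).trans ?_
      rw [ed_neg, ← heb, ← hec]
      have hC : Dq zc kc (-zb) (-kb) ≤ D + 1 := by
        have h := lemC (-zb) (-kb) (zb + zc) (kb + kc)
        rw [show -zb + (zb + zc) = zc by abel, show -kb + (kb + kc) = kc by ring,
          Dq_comm (-zb) (-kb) (zb + zc) (kb + kc)] at h
        exact h
      have h1 : (1:ℝ) ≤ Dq zc kc (-zb) (-kb) := Dq_one_le _ _ _ _
      rw [div_le_iff₀ (by linarith)]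
      nlinarith [mul_nonneg (le_of_lt hSpos) (by linarith : (0:ℝ) ≤ ea + ec - eb)]
    linarith
  · -- μ = -1, ν = -1
    have habs : |ea - -1 * eb - -1 * ec| = ea + eb + ec := by
      rw [show ea - -1 * eb - -1 * ec = ea + eb + ec by ring, abs_of_pos (by linarith)]
    rw [habs]
    have hga : 1 ≤ ea := ed_one_le _ _
    have hgb : 1 ≤ eb := ed_one_le _ _
    have hgc : 1 ≤ ec := ed_one_le _ _
    have h1 : ‖ea⁻¹ • (zb + zc) - (-1:ℝ) • (eb⁻¹ • zb)‖ ≤ 2 := by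
      rw [neg_one_smul, sub_neg_eq_add]
      refine (norm_add_le _ _).trans ?_
      have := normV_le_one (zb + zc) (kb + kc)
      have := normV_le_one zb kb
      rw [← hea] at *
      linarith [normV_le_one (zb + zc) (kb + kc), normV_le_one zb kb]
    have h2 : ‖(-1:ℝ) • (eb⁻¹ • zb) - (-1:ℝ) • (ec⁻¹ • zc)‖ ≤ 2 := by
      rw [neg_one_smul, neg_one_smul, show -(eb⁻¹ • zb) - -(ec⁻¹ • zc) = ec⁻¹ • zc - eb⁻¹ • zb by abel]
      refine (norm_sub_le _ _).trans ?_
      linarith [normV_le_one zc kc, normV_le_one zb kb]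
    linarith


/-- There is a universal constant `C > 0` such that
`|∇_{ξ,η} Φ^{n,m}_{μ,ν}(ξ,η)| ≤ C |Φ^{n,m}_{μ,ν}(ξ,η)|` for all `ξ, η, n, m` and
all sign choices `μ, ν ∈ {+1, −1}`. -/
theorem phase_gradient_bound :
    ∃ C > (0 : ℝ), ∀ (μ ν : ℝ), (μ = 1 ∨ μ = -1) → (ν = 1 ∨ ν = -1) →
      ∀ (n m : ℤ) (ξ η : EuclideanSpace ℝ (Fin 2)),
        ‖fderiv ℝ (KGphase μ ν n m) (ξ, η)‖ ≤ C * |KGphase μ ν n m (ξ, η)| := by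
  refine ⟨20, by norm_num, ?_⟩
  intro μ ν hμ hν n m ξ η
  set ka : ℝ := (n : ℝ) with hka
  set kb : ℝ := ((n - m : ℤ) : ℝ) with hkb
  set kc : ℝ := (m : ℝ) with hkc
  set F := ContinuousLinearMap.fst ℝ E2 E2 with hF
  set S := ContinuousLinearMap.snd ℝ E2 E2 with hS
  set L : E2 × E2 →L[ℝ] ℝ :=
    (((ed ξ ka)⁻¹ • (innerSL ℝ ξ)).comp F
      - μ • (((ed (ξ - η) kb)⁻¹ • (innerSL ℝ (ξ - η))).comp (F - S)))
      - ν • (((ed η kc)⁻¹ • (innerSL ℝ η)).comp S) with hL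
  have hder : HasFDerivAt (KGphase μ ν n m) L (ξ, η) := by
    have ha : HasFDerivAt (fun p : E2 × E2 => ed p.1 ka)
        (((ed ξ ka)⁻¹ • (innerSL ℝ ξ)).comp F) (ξ, η) :=
      by have := (hasFDerivAt_ed ka ξ).comp (x := (ξ, η)) (hasFDerivAt_fst (𝕜 := ℝ) (E := E2) (F := E2)); exact this
    have hb0 : HasFDerivAt (fun p : E2 × E2 => p.1 - p.2) (F - S) (ξ, η) :=
      (hasFDerivAt_fst).sub (hasFDerivAt_snd)
    have hb : HasFDerivAt (fun p : E2 × E2 => ed (p.1 - p.2) kb)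
        (((ed (ξ - η) kb)⁻¹ • (innerSL ℝ (ξ - η))).comp (F - S)) (ξ, η) :=
      by have := (hasFDerivAt_ed kb (ξ - η)).comp (x := (ξ, η)) hb0; exact this
    have hc : HasFDerivAt (fun p : E2 × E2 => ed p.2 kc)
        (((ed η kc)⁻¹ • (innerSL ℝ η)).comp S) (ξ, η) :=
      by have := (hasFDerivAt_ed kc η).comp (x := (ξ, η)) (hasFDerivAt_snd (𝕜 := ℝ) (E := E2) (F := E2)); exact this
    exact (ha.sub (hb.const_mul μ)).sub (hc.const_mul ν)
  rw [hder.fderiv]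
  set u : E2 := (ed ξ ka)⁻¹ • ξ - μ • ((ed (ξ - η) kb)⁻¹ • (ξ - η)) with hu
  set v : E2 := μ • ((ed (ξ - η) kb)⁻¹ • (ξ - η)) - ν • ((ed η kc)⁻¹ • η) with hv
  have hLapp : ∀ p : E2 × E2, L p = ⟪u, p.1⟫ + ⟪v, p.2⟫ := by
    intro p
    simp only [hL, hu, hv, hF, hS,  ContinuousLinearMap.sub_apply, ContinuousLinearMap.smul_apply,
      ContinuousLinearMap.comp_apply, ContinuousLinearMap.coe_fst', ContinuousLinearMap.coe_snd',
      innerSL_apply_apply, inner_sub_left, real_inner_smul_left, smul_eq_mul, inner_sub_right]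
    ring
  have hopn : ‖L‖ ≤ ‖u‖ + ‖v‖ := by
    refine ContinuousLinearMap.opNorm_le_bound L (by positivity) (fun p => ?_)
    rw [hLapp p, Real.norm_eq_abs]
    calc |⟪u, p.1⟫ + ⟪v, p.2⟫| ≤ |⟪u, p.1⟫| + |⟪v, p.2⟫| := abs_add_le _ _
    _ ≤ ‖u‖ * ‖p.1‖ + ‖v‖ * ‖p.2‖ :=
        add_le_add (abs_real_inner_le_norm _ _) (abs_real_inner_le_norm _ _)
    _ ≤ ‖u‖ * ‖p‖ + ‖v‖ * ‖p‖ := by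
        gcongr
        · exact norm_fst_le p
        · exact norm_snd_le p
    _ = (‖u‖ + ‖v‖) * ‖p‖ := by ring
  refine hopn.trans ?_
  have hsum : (ξ - η) + η = ξ := by abel
  have hksum : kb + kc = ka := by rw [hka, hkb, hkc]; push_cast; ring
  have hkey := keybound (ξ - η) η kb kc μ ν hμ hν
  rw [hsum, hksum] at hkey
  have hphase : KGphase μ ν n m (ξ, η) = ed ξ ka - μ * ed (ξ - η) kb - ν * ed η kc := rfl
  rw [hphase]
  exact hkey
end
end

section
/- Let λ ≥ 1, n ∈ ℤ, t > 0, x ∈ ℝ², and define φ(ξ) = (1/λ)√(1 + |λξ|² + n²) + (x·ξ)/t for ξ ∈ ℝ². If t ≥ 100|x|(λ + |n|)/λ, then for every ξ ∈ ℝ² with 5/8 ≤ |ξ| ≤ 8/5 one has |∇φ(ξ)| ≥ (1/24) · λ/(λ + |n|). -/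
noncomputable section

/-- Non-stationary-phase gradient lower bound, Case 4 (time dominates):
with `φ(ξ) = (1/λ)√(1 + |λξ|² + n²) + (x·ξ)/t`, if `t ≥ 100|x|(λ+|n|)/λ` then
`|∇φ(ξ)| ≥ (1/24) λ/(λ+|n|)` on the annulus `5/8 ≤ |ξ| ≤ 8/5`. -/
theorem nonstationary_phase_lower_bound_time_dominant
    (lam : ℝ) (hlam : 1 ≤ lam) (n : ℤ) (t : ℝ) (ht : 0 < t)
    (x : EuclideanSpace ℝ (Fin 2))
    (hT : 100 * ‖x‖ * (lam + |(n : ℝ)|) / lam ≤ t)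
    (ξ : EuclideanSpace ℝ (Fin 2)) (h1 : 5 / 8 ≤ ‖ξ‖) (h2 : ‖ξ‖ ≤ 8 / 5) :
    (1 / 24) * (lam / (lam + |(n : ℝ)|)) ≤
      ‖fderiv ℝ (fun ζ : EuclideanSpace ℝ (Fin 2) =>
          (1 / lam) * Real.sqrt (1 + (lam * ‖ζ‖) ^ 2 + (n : ℝ) ^ 2)
            + (inner ℝ x ζ : ℝ) / t) ξ‖ := by
  have hlam0 : (0:ℝ) < lam := lt_of_lt_of_le one_pos hlam
  set A : ℝ := lam + |(n : ℝ)| with hAdef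
  have hA0 : 0 < A := by positivity
  have hF0 : (0:ℝ) < 1 + (lam * ‖ξ‖) ^ 2 + (n : ℝ) ^ 2 := by positivity
  set F : ℝ := Real.sqrt (1 + (lam * ‖ξ‖) ^ 2 + (n : ℝ) ^ 2) with hFdef
  have hF : 0 < F := Real.sqrt_pos.2 hF0
  -- derivative of the inner-square part
  have hsq : HasFDerivAt (fun ζ : EuclideanSpace ℝ (Fin 2) =>
      1 + (lam * ‖ζ‖) ^ 2 + (n : ℝ) ^ 2)
      ((2 * lam ^ 2) • innerSL ℝ ξ) ξ := by
    have h0 : HasFDerivAt (fun ζ : EuclideanSpace ℝ (Fin 2) => ‖ζ‖ ^ 2)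
        (2 • innerSL ℝ ξ) ξ := (hasStrictFDerivAt_norm_sq ξ).hasFDerivAt
    have h1' : HasFDerivAt (fun ζ : EuclideanSpace ℝ (Fin 2) =>
        1 + lam ^ 2 * ‖ζ‖ ^ 2 + (n : ℝ) ^ 2)
        ((2 * lam ^ 2) • innerSL ℝ ξ) ξ := by
      have := ((h0.const_mul (lam ^ 2)).const_add 1).add_const ((n : ℝ) ^ 2)
      refine this.congr_fderiv ?_
      ext w
      simp [smul_smul]
      ring
    convert h1' using 2 with ζ
    ring
  have hφ : HasFDerivAt (fun ζ : EuclideanSpace ℝ (Fin 2) =>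
      (1 / lam) * Real.sqrt (1 + (lam * ‖ζ‖) ^ 2 + (n : ℝ) ^ 2)
        + (inner ℝ x ζ : ℝ) / t)
      (innerSL ℝ ((lam / F) • ξ + t⁻¹ • x)) ξ := by
    have hs : HasDerivAt Real.sqrt (1 / (2 * F)) (1 + (lam * ‖ξ‖) ^ 2 + (n : ℝ) ^ 2) := by
      simpa [hFdef] using Real.hasDerivAt_sqrt hF0.ne'
    have hcomp := (hs.comp_hasFDerivAt ξ hsq).const_mul (1 / lam)
    have hin : HasFDerivAt (fun ζ : EuclideanSpace ℝ (Fin 2) => (inner ℝ x ζ : ℝ) / t)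
        (t⁻¹ • innerSL ℝ x) ξ := by
      simpa [div_eq_inv_mul] using ((innerSL ℝ x).hasFDerivAt (x := ξ)).const_mul t⁻¹
    have := hcomp.add hin
    refine this.congr_fderiv ?_
    ext w
    simp only [ContinuousLinearMap.add_apply, ContinuousLinearMap.coe_smul',
      Pi.smul_apply, innerSL_apply_apply, smul_eq_mul, inner_add_left, real_inner_smul_left]
    field_simp
  rw [hφ.fderiv, innerSL_apply_norm]
  -- lower bound the norm of the vector
  have htri : (lam / F) * ‖ξ‖ - ‖x‖ / t ≤ ‖(lam / F) • ξ + t⁻¹ • x‖ := by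
    have h3 : ‖(lam / F) • ξ‖ ≤ ‖(lam / F) • ξ + t⁻¹ • x‖ + ‖t⁻¹ • x‖ := by
      have := norm_add_le ((lam / F) • ξ + t⁻¹ • x) (-(t⁻¹ • x))
      simpa using this
    have h1' : ‖(lam / F) • ξ‖ = (lam / F) * ‖ξ‖ := by
      rw [norm_smul, Real.norm_eq_abs, abs_of_pos (div_pos hlam0 hF)]
    have h2' : ‖t⁻¹ • x‖ = ‖x‖ / t := by
      rw [norm_smul, Real.norm_eq_abs, abs_of_pos (inv_pos.2 ht)]; ring
    linarith
  -- F ≤ 6 A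
  have hF6 : F ≤ 6 * A := by
    rw [hFdef]
    have h6A : (6 * A) = Real.sqrt ((6 * A) ^ 2) := (Real.sqrt_sq (by positivity)).symm
    rw [h6A]
    apply Real.sqrt_le_sqrt
    have hn2 : |(n : ℝ)| ^ 2 = (n : ℝ) ^ 2 := sq_abs _
    have hn0 : 0 ≤ |(n : ℝ)| := abs_nonneg _
    have hl2 : 1 ≤ lam ^ 2 := one_le_pow₀ hlam
    have hx2 : ‖ξ‖ ^ 2 ≤ (8/5) ^ 2 := by nlinarith [norm_nonneg ξ]
    rw [hAdef]
    nlinarith [mul_nonneg hlam0.le hn0, sq_nonneg (lam * ‖ξ‖),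
      mul_le_mul_of_nonneg_left hx2 (sq_nonneg lam)]
  -- ‖x‖ / t ≤ lam / (100 * A)
  have hxt : ‖x‖ / t ≤ lam / (100 * A) := by
    rw [div_le_div_iff₀ ht (by positivity)]
    have := (div_le_iff₀ hlam0).1 hT
    nlinarith [norm_nonneg x]
  -- main lower bound
  have hd : lam / (6 * A) ≤ lam / F :=
    div_le_div_of_nonneg_left hlam0.le hF hF6
  have hdF : 0 ≤ lam / F := div_nonneg hlam0.le hF.le
  have hmain : (5 / 8) * (lam / (6 * A)) ≤ (lam / F) * ‖ξ‖ := by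
    calc (5 / 8) * (lam / (6 * A)) ≤ (5 / 8) * (lam / F) := by linarith
      _ ≤ (lam / F) * ‖ξ‖ := by nlinarith
  have hLA : 0 ≤ lam / A := div_nonneg hlam0.le hA0.le
  have e1 : lam / (6 * A) = (lam / A) / 6 := by
    rw [div_div]; ring_nf
  have e2 : lam / (100 * A) = (lam / A) / 100 := by
    rw [div_div]; ring_nf
  have hfin : (1 / 24) * (lam / A) ≤ (5 / 8) * (lam / (6 * A)) - lam / (100 * A) := by
    rw [e1, e2]; linarith
  linarith
end
end

section
/- Let λ ≥ 1, n ∈ ℤ, t > 0, x ∈ ℝ², and define φ(ξ) = (1/λ)√(1 + |λξ|² + n²) + (x·ξ)/t for ξ ∈ ℝ². If t ≤ |x|(λ + |n|)/(100λ), then for every ξ ∈ ℝ² with 5/8 ≤ |ξ| ≤ 8/5 one has |∇φ(ξ)| ≥ λ/(λ + |n|). -/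
noncomputable section

set_option maxHeartbeats 1000000 in
/-- Non-stationary-phase gradient lower bound (spatial side dominates):
with `φ(ξ) = (1/λ)√(1 + |λξ|² + n²) + (x·ξ)/t`, if `t ≤ |x|(λ+|n|)/(100λ)` then
`|∇φ(ξ)| ≥ λ/(λ+|n|)` on the annulus `5/8 ≤ |ξ| ≤ 8/5`. -/
theorem nonstationary_phase_lower_bound_space_dominant
    (lam : ℝ) (hlam : 1 ≤ lam) (n : ℤ) (t : ℝ) (ht : 0 < t)
    (x : EuclideanSpace ℝ (Fin 2))
    (hT : t ≤ ‖x‖ * (lam + |(n : ℝ)|) / (100 * lam))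
    (ξ : EuclideanSpace ℝ (Fin 2)) (h1 : 5 / 8 ≤ ‖ξ‖) (h2 : ‖ξ‖ ≤ 8 / 5) :
    lam / (lam + |(n : ℝ)|) ≤
      ‖fderiv ℝ (fun ζ : EuclideanSpace ℝ (Fin 2) =>
          (1 / lam) * Real.sqrt (1 + (lam * ‖ζ‖) ^ 2 + (n : ℝ) ^ 2)
            + (inner ℝ x ζ : ℝ) / t) ξ‖ := by
  have hlam0 : (0 : ℝ) < lam := lt_of_lt_of_le one_pos hlam
  set s : ℝ := 1 + (lam * ‖ξ‖) ^ 2 + (n : ℝ) ^ 2 with hs_def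
  have hs_pos : 0 < s := by positivity
  set r : ℝ := Real.sqrt s with hr_def
  have hr_pos : 0 < r := Real.sqrt_pos.mpr hs_pos
  have hr_sq : r ^ 2 = s := Real.sq_sqrt hs_pos.le
  -- derivative of ζ ↦ 1 + (lam‖ζ‖)² + n²
  have hu : HasFDerivAt
      (fun ζ : EuclideanSpace ℝ (Fin 2) => 1 + (lam * ‖ζ‖) ^ 2 + (n : ℝ) ^ 2)
      (lam ^ 2 • (2 • (innerSL ℝ ξ))) ξ := by
    have h0 : HasFDerivAt (fun ζ : EuclideanSpace ℝ (Fin 2) => ‖ζ‖ ^ 2)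
        (2 • ((innerSL ℝ ξ).comp (ContinuousLinearMap.id ℝ _))) ξ := by
      simpa using (hasFDerivAt_id ξ).norm_sq
    have h0' : HasFDerivAt (fun ζ : EuclideanSpace ℝ (Fin 2) => ‖ζ‖ ^ 2)
        (2 • innerSL ℝ ξ) ξ := by
      simpa using h0
    have : HasFDerivAt (fun ζ : EuclideanSpace ℝ (Fin 2) =>
        1 + lam ^ 2 * ‖ζ‖ ^ 2 + (n : ℝ) ^ 2)
        (lam ^ 2 • (2 • innerSL ℝ ξ)) ξ := by
      exact (((h0'.const_mul (lam ^ 2)).const_add 1).add_const ((n : ℝ) ^ 2)).congr_fderiv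
        (by rw [smul_comm])
    refine this.congr_of_eventuallyEq ?_
    filter_upwards with ζ
    ring
  have hsqrt : HasDerivAt Real.sqrt (1 / (2 * r)) s := Real.hasDerivAt_sqrt hs_pos.ne'
  have hcomp : HasFDerivAt
      (fun ζ : EuclideanSpace ℝ (Fin 2) =>
        Real.sqrt (1 + (lam * ‖ζ‖) ^ 2 + (n : ℝ) ^ 2))
      ((1 / (2 * r)) • (lam ^ 2 • (2 • (innerSL ℝ ξ)))) ξ := hsqrt.comp_hasFDerivAt ξ hu
  have hinner : HasFDerivAt
      (fun ζ : EuclideanSpace ℝ (Fin 2) => (inner ℝ x ζ : ℝ) / t)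
      (t⁻¹ • innerSL ℝ x) ξ := by
    have := ((innerSL ℝ x).hasFDerivAt (x := ξ)).const_mul t⁻¹
    simpa [div_eq_inv_mul] using this
  set y : EuclideanSpace ℝ (Fin 2) := (lam / r) • ξ + t⁻¹ • x with hy_def
  have hD : HasFDerivAt
      (fun ζ : EuclideanSpace ℝ (Fin 2) =>
        (1 / lam) * Real.sqrt (1 + (lam * ‖ζ‖) ^ 2 + (n : ℝ) ^ 2)
          + (inner ℝ x ζ : ℝ) / t) (innerSL ℝ y) ξ := by
    have := (hcomp.const_mul (1 / lam)).add hinner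
    refine this.congr_fderiv ?_
    apply ContinuousLinearMap.ext
    intro v
    simp only [ContinuousLinearMap.add_apply, ContinuousLinearMap.smul_apply,
      innerSL_apply_apply, hy_def, inner_add_left, real_inner_smul_left, smul_eq_mul]
    field_simp
    ring
  rw [hD.fderiv, innerSL_apply_norm]
  -- now a norm estimate on y
  have hn0 : (0 : ℝ) ≤ |(n : ℝ)| := abs_nonneg _
  have hln : 0 < lam + |(n : ℝ)| := by linarith
  -- r lower bound
  have hr_lb : (5 / 16) * (lam + |(n : ℝ)|) ≤ r := by
    have hc : (0 : ℝ) < (5 / 16) * (lam + |(n : ℝ)|) := by positivity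
    have hξ2 : (5 / 8 : ℝ) * (5 / 8) ≤ ‖ξ‖ * ‖ξ‖ :=
      mul_le_mul h1 h1 (by norm_num) (norm_nonneg ξ)
    have hsq2 : ((5 / 16) * (lam + |(n : ℝ)|)) ^ 2 ≤ r ^ 2 := by
      rw [hr_sq]
      nlinarith [sq_nonneg (lam - |(n : ℝ)|), sq_abs ((n : ℝ)),
        mul_le_mul_of_nonneg_left hξ2 (sq_nonneg lam), hlam0]
    nlinarith [hsq2, hr_pos, hc]
  -- ‖x‖/t lower bound
  have hx_pos : 0 < ‖x‖ := by
    rcases lt_or_ge 0 ‖x‖ with h | h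
    · exact h
    exfalso
    have hx0 : ‖x‖ = 0 := le_antisymm h (norm_nonneg _)
    rw [hx0, zero_mul, zero_div] at hT
    exact absurd (ht.trans_le hT) (lt_irrefl 0)
  have hxt : 100 * lam / (lam + |(n : ℝ)|) ≤ ‖x‖ / t := by
    rw [div_le_div_iff₀ hln ht]
    calc 100 * lam * t ≤ 100 * lam * (‖x‖ * (lam + |(n : ℝ)|) / (100 * lam)) := by
          apply mul_le_mul_of_nonneg_left hT (by positivity)
      _ = ‖x‖ * (lam + |(n : ℝ)|) := by field_simp
  -- gradient dispersive part bound
  have hdisp : (lam / r) * ‖ξ‖ ≤ 99 * lam / (lam + |(n : ℝ)|) := by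
    rw [div_mul_eq_mul_div, div_le_div_iff₀ hr_pos hln]
    nlinarith [mul_le_mul_of_nonneg_left hr_lb hlam0.le,
      mul_le_mul_of_nonneg_right h2 (mul_pos hlam0 hln).le]
  -- combine
  have hy1 : ‖(t⁻¹ : ℝ) • x‖ ≤ ‖y‖ + ‖(lam / r) • ξ‖ := by
    have : (t⁻¹ : ℝ) • x = y - (lam / r) • ξ := by
      rw [hy_def, add_sub_cancel_left]
    rw [this]
    exact norm_sub_le _ _
  have hnx : ‖(t⁻¹ : ℝ) • x‖ = ‖x‖ / t := by
    rw [norm_smul, Real.norm_eq_abs, abs_inv, abs_of_pos ht, inv_mul_eq_div]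
  have hnξ : ‖(lam / r) • ξ‖ = (lam / r) * ‖ξ‖ := by
    rw [norm_smul, Real.norm_eq_abs, abs_of_pos (by positivity)]
  have key : ‖x‖ / t - (lam / r) * ‖ξ‖ ≤ ‖y‖ := by
    rw [← hnx, ← hnξ]; linarith
  have : 100 * lam / (lam + |(n : ℝ)|) - 99 * lam / (lam + |(n : ℝ)|)
      = lam / (lam + |(n : ℝ)|) := by
    rw [div_sub_div_same]; congr 1; ring
  linarith [hxt, hdisp, key, this]
end
end
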